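/- Let θ1, θ2 ∈ (0, π) with θ1 < θ2, a_1 = e^{iθ1}, a_2 = e^{iθ2}, s_i = sin θ_i, c_i = cos θ_i, and let r2, r5 > 0 with r2 + r5 < 1. Define r4 = (s2 r2)/s1, r1 = (s2 r5)/s1, r0 + r3 = 1 − r1 − r4 − r2 − r5. Then the condition (r0+r3) + a1²·(r1+r4) + a2²·(r2+r5) = 0 holds if and only if θ1 + θ2 = π and r2 + r5 = 1/(4 sin²θ1). -/

import Mathlib

open Real Set

theorem stmt4 (θ1 θ2 : ℝ) (h1 : θ1 ∈ Ioo 0 π) (h2 : θ2 ∈ Ioo 0 π) (hlt : θ1 < θ2)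
    (r1 r2 r4 r5 r03 : ℝ) (hr2 : 0 < r2) (hr5 : 0 < r5) (hsum : r2 + r5 < 1)
    (hr4 : r4 = Real.sin θ2 * r2 / Real.sin θ1)
    (hr1 : r1 = Real.sin θ2 * r5 / Real.sin θ1)
    (hr03 : r03 = 1 - r1 - r4 - r2 - r5) :
    ((r03 : ℂ) + Complex.exp (θ1 * Complex.I) ^ 2 * ((r1 : ℂ) + (r4 : ℂ))
        + Complex.exp (θ2 * Complex.I) ^ 2 * ((r2 : ℂ) + (r5 : ℂ)) = 0)
      ↔ (θ1 + θ2 = π ∧ r2 + r5 = 1 / (4 * Real.sin θ1 ^ 2)) := by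
  obtain ⟨h1a, h1b⟩ := h1
  obtain ⟨h2a, h2b⟩ := h2
  have hs1 : 0 < Real.sin θ1 := Real.sin_pos_of_pos_of_lt_pi h1a h1b
  have hs2 : 0 < Real.sin θ2 := Real.sin_pos_of_pos_of_lt_pi h2a h2b
  have hs1' : Real.sin θ1 ≠ 0 := ne_of_gt hs1
  have hA : 0 < r2 + r5 := by linarith
  have hexp : ∀ θ : ℝ, Complex.exp ((θ:ℂ) * Complex.I) ^ 2
      = ((Real.cos (2*θ) : ℝ) : ℂ) + ((Real.sin (2*θ) : ℝ) : ℂ) * Complex.I := by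
    intro θ
    rw [sq, ← Complex.exp_add]
    have h : (θ:ℂ) * Complex.I + (θ:ℂ) * Complex.I = ((2*θ : ℝ) : ℂ) * Complex.I := by
      push_cast; ring
    rw [h, Complex.exp_mul_I, Complex.ofReal_cos, Complex.ofReal_sin]
  rw [hexp, hexp]
  have hkey : (r03 : ℂ) + (((Real.cos (2*θ1) : ℝ) : ℂ) + ((Real.sin (2*θ1) : ℝ) : ℂ) * Complex.I) * ((r1 : ℂ) + (r4 : ℂ))
      + (((Real.cos (2*θ2) : ℝ) : ℂ) + ((Real.sin (2*θ2) : ℝ) : ℂ) * Complex.I) * ((r2 : ℂ) + (r5 : ℂ))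
      = ((r03 + Real.cos (2*θ1) * (r1 + r4) + Real.cos (2*θ2) * (r2 + r5) : ℝ) : ℂ)
        + ((Real.sin (2*θ1) * (r1 + r4) + Real.sin (2*θ2) * (r2 + r5) : ℝ) : ℂ) * Complex.I := by
    push_cast; ring
  rw [hkey]
  rw [Complex.ext_iff]
  simp only [Complex.add_re, Complex.add_im, Complex.mul_re, Complex.mul_im,
    Complex.ofReal_re, Complex.ofReal_im, Complex.I_re, Complex.I_im,
    Complex.zero_re, Complex.zero_im, mul_zero, mul_one, zero_mul, add_zero, zero_add, sub_zero]
  have hsum14 : r1 + r4 = Real.sin θ2 * (r2 + r5) / Real.sin θ1 := by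
    rw [hr1, hr4]; ring
  constructor
  · rintro ⟨hre, him⟩
    rw [Real.sin_two_mul, Real.sin_two_mul, hsum14] at him
    have hfac : (Real.cos θ1 + Real.cos θ2) * (2 * Real.sin θ1 * Real.sin θ2 * (r2 + r5)) = 0 := by
      field_simp at him
      linear_combination Real.sin θ1 * him
    have hc : Real.cos θ1 + Real.cos θ2 = 0 := by
      rcases mul_eq_zero.mp hfac with h | h
      · exact h
      · exfalso; nlinarith [mul_pos (mul_pos hs1 hs2) hA]
    have hθ : θ1 = π - θ2 := by
      apply Real.injOn_cos ⟨le_of_lt h1a, le_of_lt h1b⟩ ⟨by linarith, by linarith⟩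
      rw [Real.cos_pi_sub]; linarith
    have hθsum : θ1 + θ2 = π := by linarith
    have hssin : Real.sin θ2 = Real.sin θ1 := by
      rw [show θ2 = π - θ1 by linarith, Real.sin_pi_sub]
    have hcc : Real.cos θ2 = - Real.cos θ1 := by linarith
    refine ⟨hθsum, ?_⟩
    rw [Real.cos_two_mul, Real.cos_two_mul, hcc, hsum14, hssin, hr03, hr1, hr4, hssin] at hre
    have hsc := Real.sin_sq_add_cos_sq θ1
    field_simp at hre ⊢
    nlinarith [hre, hsc, sq_nonneg (Real.sin θ1)]
  · rintro ⟨hθsum, hAval⟩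
    have hssin : Real.sin θ2 = Real.sin θ1 := by
      rw [show θ2 = π - θ1 by linarith, Real.sin_pi_sub]
    have hcc : Real.cos θ2 = - Real.cos θ1 := by
      rw [show θ2 = π - θ1 by linarith, Real.cos_pi_sub]
    have hr4' : r4 = r2 := by rw [hr4, hssin]; field_simp
    have hr1' : r1 = r5 := by rw [hr1, hssin]; field_simp
    have hsc := Real.sin_sq_add_cos_sq θ1
    have hAne : r2 + r5 = 1 / (4 * Real.sin θ1 ^ 2) := hAval
    constructor
    · rw [Real.cos_two_mul, Real.cos_two_mul, hcc, hr03, hr1', hr4']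
      have h4 : (4 : ℝ) * Real.sin θ1 ^ 2 ≠ 0 := by positivity
      field_simp at hAne
      nlinarith [hAne, hsc]
    · rw [Real.sin_two_mul, Real.sin_two_mul, hssin, hcc, hr1', hr4']
      ring
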